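/- Let H be an n×n Hermitian complex matrix and U(t) := exp(itH). Let S_L, S_R : ℝ → M_n(ℂ) be differentiable with S_L(t) and S_R(t) unitary for every t. Define F(t) := S_L(t)* U(t) S_R(t)*, A_L(t) := −i (d/dt S_L(t)*) S_L(t) + (1/2) S_L(t)* H S_L(t), and Ã_R(t) := −i S_R(t) (d/dt S_R(t)*) + (1/2) S_R(t) H S_R(t)*. Then F is differentiable and F′(t) = i A_L(t) F(t) + i F(t) Ã_R(t) for every t ∈ ℝ. -/

import Mathlib

open scoped Matrix.Norms.L2Operator
open Matrix

/-- `U t = exp(itH)`. -/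
noncomputable def timeEvol {n : ℕ} (H : Matrix (Fin n) (Fin n) ℂ) (t : ℝ) :
    Matrix (Fin n) (Fin n) ℂ :=
  NormedSpace.exp ((Complex.I * (t : ℂ)) • H)

lemma timeEvol_eq {n : ℕ} (H : Matrix (Fin n) (Fin n) ℂ) :
    timeEvol H = fun t : ℝ => NormedSpace.exp (t • (Complex.I • H)) := by
  funext t
  rw [timeEvol]
  congr 1
  ext i j
  simp [Matrix.smul_apply, Complex.real_smul]
  ring

lemma hasDerivAt_timeEvol {n : ℕ} (H : Matrix (Fin n) (Fin n) ℂ) (t : ℝ) :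
    HasDerivAt (timeEvol H) (Complex.I • (H * timeEvol H t)) t := by
  rw [timeEvol_eq]
  have := hasDerivAt_exp_smul_const (𝕂 := ℝ) (Complex.I • H) t
  convert this using 1
  case e'_4 | e'_5 | e'_6 => rfl
  have hc : Commute (Complex.I • H) (t • (Complex.I • H)) :=
    (Commute.refl _).smul_right t
  rw [← hc.exp_right]
  simp [Matrix.smul_mul]

/-- the two-sided error unitary `F(t) = S_L(t)ᴴ U(t) S_R(t)ᴴ`
satisfies `F'(t) = i A_L(t) F(t) + i F(t) Ã_R(t)`. -/
theorem stmt10 {n : ℕ} (H : Matrix (Fin n) (Fin n) ℂ) (hH : Hᴴ = H)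
    (SL SL' SR SR' : ℝ → Matrix (Fin n) (Fin n) ℂ)
    (hSL : ∀ t, HasDerivAt SL (SL' t) t)
    (hSR : ∀ t, HasDerivAt SR (SR' t) t)
    (hSLunit : ∀ t, (SL t)ᴴ * SL t = 1)
    (hSRunit : ∀ t, (SR t)ᴴ * SR t = 1)
    (F AL AR : ℝ → Matrix (Fin n) (Fin n) ℂ)
    (hF : F = fun t => (SL t)ᴴ * timeEvol H t * (SR t)ᴴ)
    (hAL : AL = fun t =>
      (-Complex.I) • ((SL' t)ᴴ * SL t) + (1 / 2 : ℂ) • ((SL t)ᴴ * H * SL t))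
    (hAR : AR = fun t =>
      (-Complex.I) • (SR t * (SR' t)ᴴ) + (1 / 2 : ℂ) • (SR t * H * (SR t)ᴴ)) :
    ∀ t : ℝ,
      HasDerivAt F (Complex.I • (AL t * F t) + Complex.I • (F t * AR t)) t := by
  intro t
  subst hF hAL hAR
  have hSLd : HasDerivAt (fun s => (SL s)ᴴ) ((SL' t)ᴴ) t := by
    simpa only [← Matrix.star_eq_conjTranspose] using (hSL t).star
  have hSRd : HasDerivAt (fun s => (SR s)ᴴ) ((SR' t)ᴴ) t := by
    simpa only [← Matrix.star_eq_conjTranspose] using (hSR t).star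
  have hU := hasDerivAt_timeEvol H t
  have key := (hSLd.mul hU).mul hSRd
  convert key using 1
  case e'_4 | e'_5 | e'_6 | e'_8 => rfl
  -- now pure algebra
  set U := timeEvol H t with hUdef
  have hSL1 : SL t * (SL t)ᴴ = 1 := mul_eq_one_comm.mp (hSLunit t)
  have hSR1 : SR t * (SR t)ᴴ = 1 := mul_eq_one_comm.mp (hSRunit t)
  have hUH : U * H = H * U := by
    rw [hUdef, timeEvol]
    exact ((Commute.refl H).smul_left _).exp_left
  simp only [Matrix.add_mul, Matrix.mul_add, Matrix.smul_mul, Matrix.mul_smul,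
    smul_add, smul_smul]
  rw [show Complex.I * -Complex.I = 1 by rw [mul_neg, Complex.I_mul_I, neg_neg]]
  simp only [one_smul]
  have e1 : (SL' t)ᴴ * SL t * ((SL t)ᴴ * U * (SR t)ᴴ) = (SL' t)ᴴ * U * (SR t)ᴴ := by
    simp only [← Matrix.mul_assoc]
    rw [Matrix.mul_assoc ((SL' t)ᴴ) (SL t) ((SL t)ᴴ), hSL1, Matrix.mul_one]
  have e2 : (SL t)ᴴ * U * (SR t)ᴴ * (SR t * (SR' t)ᴴ) = (SL t)ᴴ * U * (SR' t)ᴴ := by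
    simp only [← Matrix.mul_assoc]
    rw [Matrix.mul_assoc ((SL t)ᴴ * U) ((SR t)ᴴ) (SR t), hSRunit t, Matrix.mul_one]
  have e3 : (SL t)ᴴ * H * SL t * ((SL t)ᴴ * U * (SR t)ᴴ) = (SL t)ᴴ * H * U * (SR t)ᴴ := by
    simp only [← Matrix.mul_assoc]
    rw [Matrix.mul_assoc ((SL t)ᴴ * H) (SL t) ((SL t)ᴴ), hSL1, Matrix.mul_one]
  have e4 : (SL t)ᴴ * U * (SR t)ᴴ * (SR t * H * (SR t)ᴴ) = (SL t)ᴴ * H * U * (SR t)ᴴ := by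
    simp only [← Matrix.mul_assoc]
    rw [Matrix.mul_assoc ((SL t)ᴴ * U) ((SR t)ᴴ) (SR t), hSRunit t, Matrix.mul_one,
      Matrix.mul_assoc ((SL t)ᴴ) U H, hUH, ← Matrix.mul_assoc]
  rw [e1, e2, e3, e4]
  simp only [← Matrix.mul_assoc]
  module
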